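/- Let G = (V, E) be a finite simple graph, H the hypergraph on V whose hyperedges are the vertex sets of complete subgraphs of G, w : E → ℝ_{≥0}, and suppose d_w = φ_1 + φ_2 where φ_1 is increasing submodular and φ_2 is decreasing submodular with φ_1(∅)=φ_2(∅)=0. Then there exists a weight function w' on the cliques of G such that φ_1(X) = Σ_{K clique, K ⊆ X} w'(K) for all X ⊆ V. -/

import Mathlib

open Classical in
/-- The weighted cut function on a finite graph (Finset version). -/
noncomputable def cutW {V : Type*} [Fintype V] (G : SimpleGraph V)
    (w : Sym2 V → ℝ) (X : Finset V) : ℝ :=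
  ∑ e ∈ G.edgeFinset, if (∃ u ∈ e, u ∈ X) ∧ (∃ u ∈ e, u ∉ X) then w e else 0

/-- The Möbius transform of a set function. -/
noncomputable def mob {V : Type*} [DecidableEq V] (φ : Finset V → ℝ) (K : Finset V) : ℝ :=
  ∑ S ∈ K.powerset, (-1 : ℝ) ^ (K.card - S.card) * φ S

lemma mob_insert {V : Type*} [DecidableEq V] (φ : Finset V → ℝ) {a : V} {K : Finset V}
    (ha : a ∉ K) :
    mob φ (insert a K) = - mob φ K + mob (fun S => φ (insert a S)) K := by
  unfold mob
  rw [Finset.sum_powerset_insert ha, Finset.card_insert_of_notMem ha,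
    ← Finset.sum_neg_distrib]
  congr 1
  · apply Finset.sum_congr rfl
    intro S hS
    have h1 : S.card ≤ K.card := Finset.card_le_card (Finset.mem_powerset.1 hS)
    have h2 : K.card + 1 - S.card = (K.card - S.card) + 1 := by omega
    rw [h2, pow_succ]; ring
  · apply Finset.sum_congr rfl
    intro S hS
    have haS : a ∉ S := fun h => ha (Finset.mem_powerset.1 hS h)
    rw [Finset.card_insert_of_notMem haS]
    have h2 : K.card + 1 - (S.card + 1) = K.card - S.card := by omega
    rw [h2]

/-- Möbius inversion: summing the Möbius transform over all subsets recovers `φ`. -/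
lemma sum_mob {V : Type*} [DecidableEq V] (X : Finset V) :
    ∀ φ : Finset V → ℝ, ∑ K ∈ X.powerset, mob φ K = φ X := by
  induction X using Finset.induction_on with
  | empty => intro φ; simp [mob]
  | @insert a s ha ih =>
      intro φ
      rw [Finset.sum_powerset_insert ha, ih φ]
      have h1 : ∑ K ∈ s.powerset, mob φ (insert a K)
          = ∑ K ∈ s.powerset, (- mob φ K + mob (fun S => φ (insert a S)) K) := by
        apply Finset.sum_congr rfl
        intro K hK
        exact mob_insert φ (fun h => ha (Finset.mem_powerset.1 hK h))
      rw [h1, Finset.sum_add_distrib, Finset.sum_neg_distrib, ih φ,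
        ih (fun S => φ (insert a S))]
      ring

/-- If all second differences of `φ` in two directions `a b ∈ K` vanish, then the Möbius
coefficient of `K` vanishes. -/
lemma mob_eq_zero {V : Type*} [DecidableEq V] {φ : Finset V → ℝ} {K : Finset V} {a b : V}
    (hab : a ≠ b) (haK : a ∈ K) (hbK : b ∈ K)
    (h : ∀ S : Finset V, a ∉ S → b ∉ S →
      φ (insert a (insert b S)) + φ S = φ (insert a S) + φ (insert b S)) :
    mob φ K = 0 := by
  set K' := (K.erase a).erase b with hK'
  have hbK' : b ∉ K' := Finset.notMem_erase _ _
  have haK'0 : a ∉ K' := fun h => (Finset.notMem_erase a K) (Finset.mem_of_mem_erase h)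
  have haK' : a ∉ insert b K' := by
    simp only [Finset.mem_insert]
    rintro (rfl | h)
    · exact hab rfl
    · exact haK'0 h
  have hKeq : K = insert a (insert b K') := by
    rw [hK', Finset.insert_erase (Finset.mem_erase.2 ⟨Ne.symm hab, hbK⟩),
      Finset.insert_erase haK]
  rw [hKeq, mob_insert φ haK', mob_insert φ hbK', mob_insert (fun S => φ (insert a S)) hbK']
  have hrw : - (- mob φ K' + mob (fun S => φ (insert b S)) K')
      + (- mob (fun S => φ (insert a S)) K' + mob (fun S => φ (insert a (insert b S))) K')
      = ∑ S ∈ K'.powerset, (-1 : ℝ) ^ (K'.card - S.card) *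
          (φ (insert a (insert b S)) + φ S - φ (insert a S) - φ (insert b S)) := by
    unfold mob
    rw [neg_add, neg_neg, ← Finset.sum_neg_distrib, ← Finset.sum_neg_distrib,
      ← Finset.sum_add_distrib, ← Finset.sum_add_distrib, ← Finset.sum_add_distrib]
    apply Finset.sum_congr rfl
    intro S _
    ring
  rw [hrw]
  apply Finset.sum_eq_zero
  intro S hS
  have hSsub := Finset.mem_powerset.1 hS
  have haS : a ∉ S := fun hm => haK'0 (hSsub hm)
  have hbS : b ∉ S := fun hm => hbK' (hSsub hm)
  have := h S haS hbS
  have hz : φ (insert a (insert b S)) + φ S - φ (insert a S) - φ (insert b S) = 0 := by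
    linarith
  rw [hz, mul_zero]

open Classical in
/-- Second differences of the cut function in two non-adjacent directions vanish. -/
lemma cutW_modular {V : Type*} [Fintype V] [DecidableEq V] (G : SimpleGraph V)
    (w : Sym2 V → ℝ) {a b : V} (hab : a ≠ b) (hnadj : ¬ G.Adj a b) (S : Finset V) :
    cutW G w (insert a (insert b S)) + cutW G w S
      = cutW G w (insert a S) + cutW G w (insert b S) := by
  unfold cutW
  rw [← Finset.sum_add_distrib, ← Finset.sum_add_distrib]
  apply Finset.sum_congr rfl
  intro e he
  induction e using Sym2.inductionOn with
  | hf x y =>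
    have hadj : G.Adj x y := by
      rw [SimpleGraph.mem_edgeFinset, SimpleGraph.mem_edgeSet] at he
      exact he
    have hxy : x ≠ y := hadj.ne
    have hnab : ¬(x = a ∧ y = b) := by rintro ⟨rfl, rfl⟩; exact hnadj hadj
    have hnba : ¬(x = b ∧ y = a) := by rintro ⟨rfl, rfl⟩; exact hnadj hadj.symm
    simp only [Sym2.mem_iff, Finset.mem_insert]
    by_cases h1 : x = a <;> by_cases h2 : x = b <;> by_cases h3 : y = a <;>
      by_cases h4 : y = b <;> by_cases h5 : x ∈ S <;> by_cases h6 : y ∈ S <;>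
      simp_all

open Classical in
/-- In any monotonic sum-decomposition `d_w = φ₁ + φ₂`, the increasing part `φ₁`
is a weighted sum, over nonempty cliques contained in `X`, of clique weights. -/
theorem stmt17 {V : Type*} [Fintype V] [DecidableEq V] (G : SimpleGraph V)
    (w : Sym2 V → ℝ) (hw : ∀ e, 0 ≤ w e) (φ₁ φ₂ : Finset V → ℝ)
    (h0₁ : φ₁ ∅ = 0) (h0₂ : φ₂ ∅ = 0)
    (h1inc : ∀ X Y : Finset V, X ⊆ Y → φ₁ X ≤ φ₁ Y)
    (h1sub : ∀ X Y : Finset V, φ₁ (X ∩ Y) + φ₁ (X ∪ Y) ≤ φ₁ X + φ₁ Y)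
    (h2dec : ∀ X Y : Finset V, X ⊆ Y → φ₂ Y ≤ φ₂ X)
    (h2sub : ∀ X Y : Finset V, φ₂ (X ∩ Y) + φ₂ (X ∪ Y) ≤ φ₂ X + φ₂ Y)
    (hsum : ∀ X : Finset V, cutW G w X = φ₁ X + φ₂ X) :
    ∃ w' : Finset V → ℝ, ∀ X : Finset V,
      φ₁ X = ∑ K ∈ X.powerset.filter
          (fun K : Finset V => K.Nonempty ∧ G.IsClique (K : Set V)), w' K := by
  refine ⟨mob φ₁, fun X => ?_⟩
  have hP : ∀ K ∈ X.powerset, mob φ₁ K ≠ 0 →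
      (K.Nonempty ∧ G.IsClique (K : Set V)) := by
    intro K _ hne
    by_contra hcon
    apply hne
    by_cases hKe : K.Nonempty
    · have hnc : ¬ G.IsClique (K : Set V) := fun h => hcon ⟨hKe, h⟩
      rw [SimpleGraph.isClique_iff, Set.Pairwise] at hnc
      push_neg at hnc
      obtain ⟨a, haK, b, hbK, hab, hnadj⟩ := hnc
      rw [Finset.mem_coe] at haK hbK
      apply mob_eq_zero hab haK hbK
      intro S haS hbS
      have hU : (insert a S) ∪ (insert b S) = insert a (insert b S) := by
        ext x
        simp only [Finset.mem_union, Finset.mem_insert]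
        tauto
      have hI : (insert a S) ∩ (insert b S) = S := by
        ext x
        simp only [Finset.mem_inter, Finset.mem_insert]
        constructor
        · rintro ⟨(rfl | h1), (h2 | h2)⟩
          · exact absurd h2 hab
          · exact h2
          · exact h1
          · exact h1
        · intro hx; exact ⟨Or.inr hx, Or.inr hx⟩
      have e1 := h1sub (insert a S) (insert b S)
      rw [hI, hU] at e1
      have e2 := h2sub (insert a S) (insert b S)
      rw [hI, hU] at e2
      have e3 := cutW_modular G w hab hnadj S
      rw [hsum, hsum, hsum, hsum] at e3
      linarith
    · rw [Finset.not_nonempty_iff_eq_empty] at hKe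
      subst hKe
      simp [mob, h0₁]
  rw [Finset.sum_filter_of_ne hP, sum_mob X φ₁]
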